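/- Any transit cluster T in a DAG G can be written as a disjoint union of finitely many transit components of G. -/

import Mathlib

variable {α : Type*}

/-- All edges lie within the vertex set `V`. -/
def EdgesIn (V : Set α) (E : α → α → Prop) : Prop :=
  ∀ u v, E u v → u ∈ V ∧ v ∈ V

/-- The edge relation has no directed cycles. -/
def Acyclic (E : α → α → Prop) : Prop :=
  ∀ v, ¬ Relation.TransGen E v v

/-- A finite directed acyclic graph on vertex set `V`. -/
def IsDAG (V : Set α) (E : α → α → Prop) : Prop :=
  V.Finite ∧ EdgesIn V E ∧ Acyclic E

/-- Receivers of `T`: members of `T` with a parent outside `T`. -/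
def recs (E : α → α → Prop) (T : Set α) : Set α :=
  {v | v ∈ T ∧ ∃ u, u ∉ T ∧ E u v}

/-- Emitters of `T`: members of `T` with a child outside `T`. -/
def emis (E : α → α → Prop) (T : Set α) : Set α :=
  {v | v ∈ T ∧ ∃ u, u ∉ T ∧ E v u}

/-- Edges of `G[T^=]`: the subgraph induced by `T` with incoming edges of
receivers and outgoing edges of emitters removed. -/
def CutEdge (E : α → α → Prop) (T : Set α) (u v : α) : Prop :=
  u ∈ T ∧ v ∈ T ∧ E u v ∧ v ∉ recs E T ∧ u ∉ emis E T

/-- Undirected reachability with respect to an edge relation. -/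
def UndirReach (E : α → α → Prop) (u v : α) : Prop :=
  Relation.ReflTransGen (fun a b => E a b ∨ E b a) u v

/-- `T` is a transit cluster in the graph `(V, E)`. -/
def IsTransitCluster (V : Set α) (E : α → α → Prop) (T : Set α) : Prop :=
  T.Nonempty ∧ T ⊂ V ∧
  (∀ r₁ ∈ recs E T, ∀ r₂ ∈ recs E T,
    {u | u ∉ T ∧ E u r₁} = {u | u ∉ T ∧ E u r₂}) ∧
  (∀ e₁ ∈ emis E T, ∀ e₂ ∈ emis E T,
    {u | u ∉ T ∧ E e₁ u} = {u | u ∉ T ∧ E e₂ u}) ∧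
  (∀ x ∈ T, ∃ w, (w ∈ recs E T ∨ w ∈ emis E T) ∧ UndirReach (CutEdge E T) x w) ∧
  ((emis E T).Nonempty → ∀ r ∈ recs E T, ∃ e ∈ emis E T, Relation.ReflTransGen E r e) ∧
  ((recs E T).Nonempty → ∀ e ∈ emis E T, ∃ r ∈ recs E T, Relation.ReflTransGen E r e)

/-- Vertex set of the graph obtained by clustering `T` into the new vertex `t`. -/
def ClusterVerts (V T : Set α) (t : α) : Set α := (V \ T) ∪ {t}

/-- Edge relation of the graph obtained by clustering `T` into the new vertex `t`:
edges not touching `T` are kept, the parents of `t` are the external parents of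
`recs T`, and the children of `t` are the external children of `emis T`. -/
def ClusterEdge (E : α → α → Prop) (T : Set α) (t : α) (u v : α) : Prop :=
  (u ∉ T ∧ v ∉ T ∧ E u v) ∨
  (u ∉ T ∧ u ≠ t ∧ v = t ∧ ∃ r ∈ recs E T, E u r) ∨
  (u = t ∧ v ∉ T ∧ v ≠ t ∧ ∃ e ∈ emis E T, E e v)

/-- A transit component: a transit cluster that is connected (undirectedly)
in the subgraph it induces. -/
def IsTransitComponent (V : Set α) (E : α → α → Prop) (T : Set α) : Prop :=
  IsTransitCluster V E T ∧
  ∀ u ∈ T, ∀ v ∈ T, UndirReach (fun a b => a ∈ T ∧ b ∈ T ∧ E a b) u v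

section AuxTransit

variable {α : Type*}

/-- Auxiliary: edge relation of the subgraph induced by `T`. -/
def InnerRel (E : α → α → Prop) (T : Set α) (a b : α) : Prop := a ∈ T ∧ b ∈ T ∧ E a b

/-- Auxiliary: undirected connected component of `x` within `T`. -/
def comp (E : α → α → Prop) (T : Set α) (x : α) : Set α := {y | UndirReach (InnerRel E T) x y}

variable {E : α → α → Prop} {T : Set α}

lemma undirReach_symm {R : α → α → Prop} {a b : α} (h : UndirReach R a b) : UndirReach R b a :=
  by
    have : Std.Symm (fun a b => R a b ∨ R b a) := ⟨fun _ _ h => h.symm⟩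
    exact (Relation.ReflTransGen.stdSymm (r := fun a b => R a b ∨ R b a)).symm _ _ h

lemma mem_comp_self (E : α → α → Prop) (T : Set α) (x : α) : x ∈ comp E T x :=
  Relation.ReflTransGen.refl

lemma comp_subset {x : α} (hx : x ∈ T) : comp E T x ⊆ T := by
  intro y hy
  have hy' : Relation.ReflTransGen (fun a b => InnerRel E T a b ∨ InnerRel E T b a) x y := hy
  induction hy' with
  | refl => exact hx
  | tail _ h ih => rcases h with ⟨_, hb, _⟩ | ⟨hb, _, _⟩ <;> exact hb

lemma edge_mem_comp {x u v : α} (hv : v ∈ comp E T x) (hu : u ∈ T) (hvT : v ∈ T)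
    (h : E u v ∨ E v u) : u ∈ comp E T x :=
  Relation.ReflTransGen.tail hv (by
    rcases h with h | h
    · exact Or.inr ⟨hu, hvT, h⟩
    · exact Or.inl ⟨hvT, hu, h⟩)

lemma comp_eq_of_mem {x y z : α} (hx : z ∈ comp E T x) (hy : z ∈ comp E T y) :
    comp E T x = comp E T y := by
  ext w
  constructor <;> intro hw
  · exact Relation.ReflTransGen.trans hy (Relation.ReflTransGen.trans (undirReach_symm hx) hw)
  · exact Relation.ReflTransGen.trans hx (Relation.ReflTransGen.trans (undirReach_symm hy) hw)

lemma recs_comp {x : α} (hx : x ∈ T) : recs E (comp E T x) = recs E T ∩ comp E T x := by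
  ext v
  constructor
  · rintro ⟨hvC, u, huC, hE⟩
    have hvT : v ∈ T := comp_subset hx hvC
    have huT : u ∉ T := fun huT => huC (edge_mem_comp hvC huT hvT (Or.inl hE))
    exact ⟨⟨hvT, u, huT, hE⟩, hvC⟩
  · rintro ⟨⟨hvT, u, huT, hE⟩, hvC⟩
    exact ⟨hvC, u, fun h => huT (comp_subset hx h), hE⟩

lemma emis_comp {x : α} (hx : x ∈ T) : emis E (comp E T x) = emis E T ∩ comp E T x := by
  ext v
  constructor
  · rintro ⟨hvC, u, huC, hE⟩
    have hvT : v ∈ T := comp_subset hx hvC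
    have huT : u ∉ T := fun huT => huC (edge_mem_comp hvC huT hvT (Or.inr hE))
    exact ⟨⟨hvT, u, huT, hE⟩, hvC⟩
  · rintro ⟨⟨hvT, u, huT, hE⟩, hvC⟩
    exact ⟨hvC, u, fun h => huT (comp_subset hx h), hE⟩

/-- external parents of a vertex of the component are its external parents in `T`. -/
lemma parents_comp {x r : α} (hx : x ∈ T) (hr : r ∈ comp E T x) :
    {u | u ∉ comp E T x ∧ E u r} = {u | u ∉ T ∧ E u r} := by
  ext u
  constructor
  · rintro ⟨huC, hE⟩
    exact ⟨fun huT => huC (edge_mem_comp hr huT (comp_subset hx hr) (Or.inl hE)), hE⟩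
  · rintro ⟨huT, hE⟩
    exact ⟨fun h => huT (comp_subset hx h), hE⟩

lemma children_comp {x r : α} (hx : x ∈ T) (hr : r ∈ comp E T x) :
    {u | u ∉ comp E T x ∧ E r u} = {u | u ∉ T ∧ E r u} := by
  ext u
  constructor
  · rintro ⟨huC, hE⟩
    exact ⟨fun huT => huC (edge_mem_comp hr huT (comp_subset hx hr) (Or.inr hE)), hE⟩
  · rintro ⟨huT, hE⟩
    exact ⟨fun h => huT (comp_subset hx h), hE⟩

/-- Transfer a cut-path in `T` to a cut-path in the component. -/
lemma cut_path_comp {x a w : α} (hx : x ∈ T) (ha : a ∈ comp E T x)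
    (h : UndirReach (CutEdge E T) a w) :
    w ∈ comp E T x ∧ UndirReach (CutEdge E (comp E T x)) a w := by
  have h' : Relation.ReflTransGen (fun p q => CutEdge E T p q ∨ CutEdge E T q p) a w := h
  clear h
  induction h' with
  | refl => exact ⟨ha, Relation.ReflTransGen.refl⟩
  | @tail b c hab hbc ih =>
    obtain ⟨hbC, hpath⟩ := ih
    have hcC : c ∈ comp E T x := by
      rcases hbc with ⟨hbT, hcT, hE, _, _⟩ | ⟨hcT, hbT, hE, _, _⟩
      · exact edge_mem_comp hbC hcT hbT (Or.inr hE)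
      · exact edge_mem_comp hbC hcT hbT (Or.inl hE)
    refine ⟨hcC, Relation.ReflTransGen.tail hpath ?_⟩
    rcases hbc with ⟨hbT, hcT, hE, hcr, hbe⟩ | ⟨hcT, hbT, hE, hbr, hce⟩
    · exact Or.inl ⟨hbC, hcC, hE,
        fun h => hcr ((recs_comp hx ▸ h).1), fun h => hbe ((emis_comp hx ▸ h).1)⟩
    · exact Or.inr ⟨hcC, hbC, hE,
        fun h => hbr ((recs_comp hx ▸ h).1), fun h => hce ((emis_comp hx ▸ h).1)⟩

/-- From a directed path leaving a receiver in the component towards an emitter of `T`,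
extract an emitter in the same component. -/
lemma emitter_in_comp {x r e : α} (hx : x ∈ T) (hr : r ∈ comp E T x)
    (hpath : Relation.ReflTransGen E r e) (he : e ∈ emis E T) :
    ∃ e', e' ∈ emis E T ∧ e' ∈ comp E T x ∧ Relation.ReflTransGen E r e' := by
  revert hr
  induction hpath using Relation.ReflTransGen.head_induction_on with
  | refl => exact fun hr => ⟨e, he, hr, Relation.ReflTransGen.refl⟩
  | @head a b hab hbe ih =>
    intro ha
    by_cases hbT : b ∈ T
    · have hbC : b ∈ comp E T x := edge_mem_comp ha hbT (comp_subset hx ha) (Or.inr hab)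
      obtain ⟨e', he', he'C, hp⟩ := ih hbC
      exact ⟨e', he', he'C, Relation.ReflTransGen.head hab hp⟩
    · exact ⟨a, ⟨comp_subset hx ha, b, hbT, hab⟩, ha, Relation.ReflTransGen.refl⟩

lemma receiver_in_comp {x r e : α} (hx : x ∈ T) (he : e ∈ comp E T x)
    (hpath : Relation.ReflTransGen E r e) (hr : r ∈ recs E T) :
    ∃ r', r' ∈ recs E T ∧ r' ∈ comp E T x ∧ Relation.ReflTransGen E r' e := by
  induction hpath with
  | refl => exact ⟨r, hr, he, Relation.ReflTransGen.refl⟩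
  | @tail b c hrb hbc ih =>
    by_cases hbT : b ∈ T
    · have hbC : b ∈ comp E T x := edge_mem_comp he hbT (comp_subset hx he) (Or.inl hbc)
      obtain ⟨r', hr', hr'C, hp⟩ := ih hbC
      exact ⟨r', hr', hr'C, Relation.ReflTransGen.tail hp hbc⟩
    · exact ⟨c, ⟨comp_subset hx he, b, hbT, hbc⟩, he, Relation.ReflTransGen.refl⟩

/-- Undirected reachability within `T` transfers to reachability within the component. -/
lemma inner_reach_comp {x u v : α} (hx : x ∈ T) (hu : u ∈ comp E T x)
    (h : UndirReach (InnerRel E T) u v) :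
    UndirReach (fun a b => a ∈ comp E T x ∧ b ∈ comp E T x ∧ E a b) u v := by
  have h' : Relation.ReflTransGen (fun p q => InnerRel E T p q ∨ InnerRel E T q p) u v := h
  clear h
  induction h' with
  | refl => exact Relation.ReflTransGen.refl
  | @tail b c hub hbc ih =>
    have hbC : b ∈ comp E T x := Relation.ReflTransGen.trans hu hub
    have hcC : c ∈ comp E T x := by
      rcases hbc with ⟨hbT, hcT, hE⟩ | ⟨hcT, hbT, hE⟩
      · exact edge_mem_comp hbC hcT hbT (Or.inr hE)
      · exact edge_mem_comp hbC hcT hbT (Or.inl hE)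
    refine Relation.ReflTransGen.tail ih ?_
    rcases hbc with ⟨hbT, hcT, hE⟩ | ⟨hcT, hbT, hE⟩
    · exact Or.inl ⟨hbC, hcC, hE⟩
    · exact Or.inr ⟨hcC, hbC, hE⟩

end AuxTransit

/-- any transit cluster is a disjoint union of finitely many
transit components. -/
theorem transit_cluster_eq_disjoint_union_of_components
    (V : Set α) (E : α → α → Prop) (T : Set α)
    (hdag : IsDAG V E)
    (hT : IsTransitCluster V E T) :
    ∃ 𝒞 : Finset (Set α),
      (∀ C ∈ 𝒞, IsTransitComponent V E C) ∧
      (∀ C ∈ 𝒞, ∀ D ∈ 𝒞, C ≠ D → C ∩ D = ∅) ∧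
      T = ⋃ C ∈ 𝒞, C := by
  obtain ⟨hfinV, hEin, hacy⟩ := hdag
  obtain ⟨hTne, hTV, hrecs, hemis, hconn, hre, her⟩ := hT
  have hTsub : T ⊆ V := hTV.subset
  have hTfin : T.Finite := hfinV.subset hTsub
  have hImfin : (comp E T '' T).Finite := hTfin.image _
  refine ⟨hImfin.toFinset, ?_, ?_, ?_⟩
  · intro C hC
    rw [Set.Finite.mem_toFinset] at hC
    obtain ⟨x, hx, rfl⟩ := hC
    have hCsub : comp E T x ⊆ T := comp_subset hx
    refine ⟨⟨⟨x, mem_comp_self E T x⟩, ?_, ?_, ?_, ?_, ?_, ?_⟩, ?_⟩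
    · obtain ⟨y, hyV, hyT⟩ := Set.exists_of_ssubset hTV
      exact (Set.ssubset_iff_of_subset (hCsub.trans hTsub)).mpr
        ⟨y, hyV, fun h => hyT (hCsub h)⟩
    · intro r₁ hr₁ r₂ hr₂
      rw [recs_comp hx] at hr₁ hr₂
      rw [parents_comp hx hr₁.2, parents_comp hx hr₂.2]
      exact hrecs r₁ hr₁.1 r₂ hr₂.1
    · intro e₁ he₁ e₂ he₂
      rw [emis_comp hx] at he₁ he₂
      rw [children_comp hx he₁.2, children_comp hx he₂.2]
      exact hemis e₁ he₁.1 e₂ he₂.1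
    · intro a ha
      obtain ⟨w, hw, hpath⟩ := hconn a (hCsub ha)
      obtain ⟨hwC, hpathC⟩ := cut_path_comp hx ha hpath
      refine ⟨w, ?_, hpathC⟩
      rcases hw with hw | hw
      · exact Or.inl ((recs_comp hx).symm ▸ (⟨hw, hwC⟩ : w ∈ recs E T ∩ comp E T x))
      · exact Or.inr ((emis_comp hx).symm ▸ (⟨hw, hwC⟩ : w ∈ emis E T ∩ comp E T x))
    · intro hene r hr
      rw [recs_comp hx] at hr
      have heT : (emis E T).Nonempty := by
        obtain ⟨e, he⟩ := hene
        exact ⟨e, ((emis_comp hx) ▸ he).1⟩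
      obtain ⟨e, heT', hpath⟩ := hre heT r hr.1
      obtain ⟨e', he', he'C, hp⟩ := emitter_in_comp hx hr.2 hpath heT'
      exact ⟨e', (emis_comp hx).symm ▸ (⟨he', he'C⟩ : e' ∈ emis E T ∩ comp E T x), hp⟩
    · intro hrne e he
      rw [emis_comp hx] at he
      have hrT : (recs E T).Nonempty := by
        obtain ⟨r, hr⟩ := hrne
        exact ⟨r, ((recs_comp hx) ▸ hr).1⟩
      obtain ⟨r, hrT', hpath⟩ := her hrT e he.1
      obtain ⟨r', hr', hr'C, hp⟩ := receiver_in_comp hx he.2 hpath hrT'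
      exact ⟨r', (recs_comp hx).symm ▸ (⟨hr', hr'C⟩ : r' ∈ recs E T ∩ comp E T x), hp⟩
    · intro u hu v hv
      have huv : UndirReach (InnerRel E T) u v :=
        Relation.ReflTransGen.trans (undirReach_symm hu) hv
      exact inner_reach_comp hx hu huv
  · intro C hC D hD hne
    rw [Set.Finite.mem_toFinset] at hC hD
    obtain ⟨a, ha, rfl⟩ := hC
    obtain ⟨b, hb, rfl⟩ := hD
    by_contra h
    obtain ⟨z, hz⟩ := Set.nonempty_iff_ne_empty.mpr h
    exact hne (comp_eq_of_mem hz.1 hz.2)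
  · ext a
    simp only [Set.mem_iUnion, Set.Finite.mem_toFinset, Set.mem_image]
    constructor
    · intro ha
      exact ⟨comp E T a, ⟨⟨a, ha, rfl⟩, mem_comp_self E T a⟩⟩
    · rintro ⟨C, ⟨⟨b, hb, rfl⟩, haC⟩⟩
      exact comp_subset hb haC
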